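/- Let α be a composition of n and define T'_α to be the standard extended tableau of shape α filling the composition diagram cd(α) with 1,...,n from top to bottom along columns, left to right. Then D_{α^c; read(T'_α)} = {(i,j) : (j,i) ∈ cd(α)}, the transpose of the composition diagram of α. -/

import Mathlib

open Equiv

/-- Finset.filter with classical decidability. -/
noncomputable def cfilter {α : Type*} (p : α → Prop) (s : Finset α) : Finset α :=
  @Finset.filter α p (fun _ => Classical.propDecidable _) s

/-- Coxeter length of a permutation = number of inversions. -/
def len {n : ℕ} (σ : Perm (Fin n)) : ℕ :=
  (Finset.univ.filter fun p : Fin n × Fin n => p.1 < p.2 ∧ σ p.2 < σ p.1).card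

/-- `set(β)`: the partial sums `β₁, β₁+β₂, …` omitting the total sum (1-based values). -/
def psums (β : List ℕ) : Finset ℕ :=
  (Finset.range (β.length - 1)).image fun j => (β.take (j + 1)).sum

/-- The left descent set `Des_L(ρ) = {i ∈ [n-1] : ℓ(s_i ρ) < ℓ(ρ)}` (1-based). -/
noncomputable def DesL {n : ℕ} (ρ : Perm (Fin n)) : Finset ℕ :=
  cfilter (fun i => ∃ h' : i - 1 < n, ∃ h : i < n,
    len (Equiv.swap ⟨i - 1, h'⟩ ⟨i, h⟩ * ρ) < len ρ) (Finset.Ioo 0 n)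

/-- The diagram `D_{β;ρ}` produced by the algorithm, for a composition `β` of `n`
with `set(β) = S`: `(i,j) ∈ D` iff `R_j ∩ C_i ≠ ∅`, i.e. iff some (1-based)
position `r` lies in the `j`-th block of the `set(β^c)`-partition of `[n]` while
the value `ρ(r)` lies in the `i`-th block of the `Des_L(ρ)`-partition. -/
noncomputable def Dalg {n : ℕ} (S : Finset ℕ) (ρ : Perm (Fin n)) : Finset (ℕ × ℕ) :=
  Finset.image (fun p : Fin n =>
    (1 + ((DesL ρ).filter fun k => k < (ρ p : ℕ) + 1).card,
     1 + (((Finset.Icc 1 (n - 1)) \ S).filter fun z => z < (p : ℕ) + 1).card))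
    Finset.univ

/-- The composition diagram `cd(α)`: boxes `(i,j)` (row `i` from the top, column
`j` from the left) with `1 ≤ i ≤ ℓ(α)` and `1 ≤ j ≤ αᵢ`. -/
def cdFinset (α : List ℕ) : Finset (ℕ × ℕ) :=
  (Finset.range α.length).biUnion fun i =>
    (Finset.Icc 1 (α.getD i 0)).image fun j => (i + 1, j)

/-- Filling order of `T'_α`: along columns top to bottom, columns left to right. -/
def ColTopEnum {n : ℕ} (v : Fin n → ℕ × ℕ) : Prop :=
  ∀ i j : Fin n, i < j ↔ ((v i).2 < (v j).2 ∨ ((v i).2 = (v j).2 ∧ (v i).1 < (v j).1))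

/-- Reading order for composition diagrams: rows right to left, starting with the
top row. -/
def ReadTopEnum {n : ℕ} (q : Fin n → ℕ × ℕ) : Prop :=
  ∀ i j : Fin n, i < j ↔ ((q i).1 < (q j).1 ∨ ((q i).1 = (q j).1 ∧ (q j).2 < (q i).2))

/-! ### Auxiliary lemmas -/

lemma mem_cdFinset {α : List ℕ} {c : ℕ × ℕ} :
    c ∈ cdFinset α ↔ ∃ i < α.length, c.1 = i + 1 ∧ 1 ≤ c.2 ∧ c.2 ≤ α.getD i 0 := by
  simp only [cdFinset, Finset.mem_biUnion, Finset.mem_range, Finset.mem_image, Finset.mem_Icc]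
  constructor
  · rintro ⟨i, hi, j, ⟨h1, h2⟩, rfl⟩
    exact ⟨i, hi, rfl, h1, h2⟩
  · rintro ⟨i, hi, h1, h2, h3⟩
    exact ⟨i, hi, c.2, ⟨h2, h3⟩, by rw [← h1]⟩

lemma take_sum_eq (l : List ℕ) (i : ℕ) :
    (l.take i).sum = ∑ i' ∈ Finset.range l.length, if i' < i then l.getD i' 0 else 0 := by
  induction l generalizing i with
  | nil => simp
  | cons a l ih =>
    cases i with
    | zero => simp
    | succ i =>
      simp only [List.take_succ_cons, List.sum_cons, List.length_cons]
      rw [Finset.sum_range_succ']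
      simp only [List.getD_cons_succ, List.getD_cons_zero, Nat.succ_lt_succ_iff]
      rw [ih i]
      simp [Nat.add_comm]

lemma rows_card (α : List ℕ) (i : ℕ) :
    ((cdFinset α).filter fun c => c.1 ≤ i).card = (α.take i).sum := by
  classical
  unfold cdFinset
  rw [Finset.filter_biUnion, Finset.card_biUnion]
  · rw [take_sum_eq]
    apply Finset.sum_congr rfl
    intro i' _
    rw [Finset.filter_image]
    by_cases h : i' + 1 ≤ i
    · rw [Finset.filter_true_of_mem (fun _ _ => h)]
      rw [Finset.card_image_of_injective _ (fun a b hab => by simpa using hab)]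
      rw [Nat.card_Icc]
      simp only [if_pos (by omega : i' < i)]
      omega
    · rw [Finset.filter_false_of_mem (fun _ _ => h)]
      simp only [Finset.image_empty, Finset.card_empty, if_neg (by omega : ¬ i' < i)]
  · intro x _ y _ hxy
    rw [Function.onFun_apply, Finset.disjoint_left]
    intro c hc hc'
    simp only [Finset.mem_filter, Finset.mem_image, Finset.mem_Icc] at hc hc'
    obtain ⟨⟨j, _, rfl⟩, _⟩ := hc
    obtain ⟨⟨j', _, h⟩, _⟩ := hc'
    have hxy' := congrArg Prod.fst h
    simp only at hxy'
    exact hxy (by omega)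
  
lemma card_filter_lt_succ (s : Finset ℕ) (m : ℕ) :
    (s.filter fun k => k < m + 1).card
      = (s.filter fun k => k < m).card + (if m ∈ s then 1 else 0) := by
  classical
  have h : (s.filter fun k => k < m + 1)
      = (s.filter fun k => k < m) ∪ (s.filter fun k => k = m) := by
    ext a
    simp only [Finset.mem_filter, Finset.mem_union]
    constructor
    · rintro ⟨ha, h2⟩
      rcases Nat.lt_or_ge a m with h3 | h3
      · exact Or.inl ⟨ha, h3⟩
      · exact Or.inr ⟨ha, by omega⟩
    · rintro (⟨ha, h2⟩ | ⟨ha, h2⟩) <;> exact ⟨ha, by omega⟩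
  rw [h, Finset.card_union_of_disjoint, Finset.filter_eq']
  · split <;> simp
  · rw [Finset.disjoint_left]
    intro a ha hb
    simp only [Finset.mem_filter] at ha hb
    omega

lemma swap_adj_lt {n : ℕ} {a b x y : Fin n} (hab : (a : ℕ) + 1 = (b : ℕ))
    (h1 : ¬(x = a ∧ y = b)) (h2 : ¬(x = b ∧ y = a)) :
    Equiv.swap a b x < Equiv.swap a b y ↔ x < y := by
  have key : ∀ z : Fin n, ((Equiv.swap a b z : Fin n) : ℕ)
      = if (z : ℕ) = (a : ℕ) then (b : ℕ) else if (z : ℕ) = (b : ℕ) then (a : ℕ) else (z : ℕ) := by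
    intro z
    rw [Equiv.swap_apply_def]
    rcases eq_or_ne z a with rfl | hza
    · simp
    · rcases eq_or_ne z b with rfl | hzb
      · rw [if_neg hza]
        simp [if_neg (fun hh : (z:ℕ) = (a:ℕ) => hza (Fin.ext hh))]
      · rw [if_neg hza, if_neg hzb, if_neg (fun hh => hza (Fin.ext hh)),
          if_neg (fun hh => hzb (Fin.ext hh))]
  simp only [Fin.ext_iff, not_and] at h1 h2
  rw [Fin.lt_def, Fin.lt_def, key, key]
  split_ifs <;> omega

lemma len_swap_lt {n : ℕ} (σ : Perm (Fin n)) {a b : Fin n} (hab : (a : ℕ) + 1 = (b : ℕ)) :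
    len (Equiv.swap a b * σ) < len σ ↔ σ⁻¹ b < σ⁻¹ a := by
  classical
  have hσu : σ (σ⁻¹ a) = a := σ.apply_symm_apply a
  have hσw : σ (σ⁻¹ b) = b := σ.apply_symm_apply b
  have hba : ¬ (b < a) := by rw [Fin.lt_def]; omega
  have hab0 : a < b := by rw [Fin.lt_def]; omega
  have huw : σ⁻¹ a ≠ σ⁻¹ b := by
    intro h
    rw [← hσu, h, hσw] at hab0
    exact lt_irrefl _ hab0
  have key : ∀ p1 p2 : Fin n, ¬(p1 = σ⁻¹ b ∧ p2 = σ⁻¹ a) → ¬(p1 = σ⁻¹ a ∧ p2 = σ⁻¹ b) →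
      ((Equiv.swap a b * σ) p2 < (Equiv.swap a b * σ) p1 ↔ σ p2 < σ p1) := by
    intro p1 p2 hp1 hp2
    simp only [Perm.mul_apply]
    apply swap_adj_lt hab
    · rintro ⟨e1, e2⟩
      refine hp1 ⟨?_, ?_⟩
      · rw [← e2]; exact (σ.symm_apply_apply _).symm
      · rw [← e1]; exact (σ.symm_apply_apply _).symm
    · rintro ⟨e1, e2⟩
      refine hp2 ⟨?_, ?_⟩
      · rw [← e2]; exact (σ.symm_apply_apply _).symm
      · rw [← e1]; exact (σ.symm_apply_apply _).symm
  unfold len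
  rcases lt_or_ge (σ⁻¹ b) (σ⁻¹ a) with h | h
  · -- remove the inversion (σ⁻¹ b, σ⁻¹ a)
    have hs : (Finset.univ.filter fun p : Fin n × Fin n =>
          p.1 < p.2 ∧ (Equiv.swap a b * σ) p.2 < (Equiv.swap a b * σ) p.1)
        = (Finset.univ.filter fun p : Fin n × Fin n =>
          p.1 < p.2 ∧ σ p.2 < σ p.1).erase (σ⁻¹ b, σ⁻¹ a) := by
      ext ⟨p1, p2⟩
      simp only [Finset.mem_filter, Finset.mem_erase, Finset.mem_univ, true_and, Prod.mk.injEq,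
        Ne, not_and]
      constructor
      · rintro ⟨hlt, hinv⟩
        have hne : ¬(p1 = σ⁻¹ b ∧ p2 = σ⁻¹ a) := by
          rintro ⟨rfl, rfl⟩
          simp only [Perm.mul_apply, hσu, hσw, Equiv.swap_apply_left, Equiv.swap_apply_right]
            at hinv
          exact hba hinv
        have hne2 : ¬(p1 = σ⁻¹ a ∧ p2 = σ⁻¹ b) := by
          rintro ⟨rfl, rfl⟩
          exact absurd hlt (by simpa using not_lt.2 (le_of_lt h))
        exact ⟨fun e1 e2 => (hne ⟨e1, e2⟩).elim, hlt, (key p1 p2 hne hne2).1 hinv⟩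
      · rintro ⟨hne, hlt, hinv⟩
        have hne' : ¬(p1 = σ⁻¹ b ∧ p2 = σ⁻¹ a) := fun ⟨e1, e2⟩ => hne e1 e2
        have hne2 : ¬(p1 = σ⁻¹ a ∧ p2 = σ⁻¹ b) := by
          rintro ⟨rfl, rfl⟩
          rw [hσu, hσw] at hinv
          exact hba hinv
        exact ⟨hlt, (key p1 p2 hne' hne2).2 hinv⟩
    rw [hs]
    have hmem : (σ⁻¹ b, σ⁻¹ a) ∈ (Finset.univ.filter fun p : Fin n × Fin n =>
        p.1 < p.2 ∧ σ p.2 < σ p.1) := by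
      simp only [Finset.mem_filter, Finset.mem_univ, true_and]
      exact ⟨h, by rw [hσu, hσw]; exact hab0⟩
    have := Finset.card_erase_of_mem hmem
    have hpos : 0 < (Finset.univ.filter fun p : Fin n × Fin n =>
        p.1 < p.2 ∧ σ p.2 < σ p.1).card := Finset.card_pos.2 ⟨_, hmem⟩
    simp only [this]
    constructor
    · intro _; exact h
    · intro _; omega
  · -- insert the new inversion (σ⁻¹ a, σ⁻¹ b)
    have h' : σ⁻¹ a < σ⁻¹ b := lt_of_le_of_ne h huw
    have hs : (Finset.univ.filter fun p : Fin n × Fin n =>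
          p.1 < p.2 ∧ (Equiv.swap a b * σ) p.2 < (Equiv.swap a b * σ) p.1)
        = insert (σ⁻¹ a, σ⁻¹ b) (Finset.univ.filter fun p : Fin n × Fin n =>
          p.1 < p.2 ∧ σ p.2 < σ p.1) := by
      ext ⟨p1, p2⟩
      simp only [Finset.mem_filter, Finset.mem_insert, Finset.mem_univ, true_and,
        Prod.mk.injEq]
      constructor
      · rintro ⟨hlt, hinv⟩
        by_cases hc : p1 = σ⁻¹ a ∧ p2 = σ⁻¹ b
        · exact Or.inl hc
        · have hne1 : ¬(p1 = σ⁻¹ b ∧ p2 = σ⁻¹ a) := by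
            rintro ⟨rfl, rfl⟩; exact lt_asymm h' hlt
          exact Or.inr ⟨hlt, (key p1 p2 hne1 hc).1 hinv⟩
      · rintro (⟨rfl, rfl⟩ | ⟨hlt, hinv⟩)
        · refine ⟨h', ?_⟩
          simp only [Perm.mul_apply, hσu, hσw, Equiv.swap_apply_left, Equiv.swap_apply_right]
          exact hab0
        · have hne1 : ¬(p1 = σ⁻¹ b ∧ p2 = σ⁻¹ a) := by
            rintro ⟨rfl, rfl⟩; exact lt_asymm h' hlt
          have hne2 : ¬(p1 = σ⁻¹ a ∧ p2 = σ⁻¹ b) := by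
            rintro ⟨rfl, rfl⟩
            rw [hσu, hσw] at hinv
            exact hba hinv
          exact ⟨hlt, (key p1 p2 hne1 hne2).2 hinv⟩
    have hnotmem : (σ⁻¹ a, σ⁻¹ b) ∉ (Finset.univ.filter fun p : Fin n × Fin n =>
        p.1 < p.2 ∧ σ p.2 < σ p.1) := by
      simp only [Finset.mem_filter, Finset.mem_univ, true_and, not_and]
      intro _
      rw [hσu, hσw]
      exact hba
    rw [hs, Finset.card_insert_of_notMem hnotmem]
    constructor
    · intro hh; omega
    · intro hh; exact absurd hh (not_lt.2 h)

lemma cfilter_mem {β : Type*} (P : β → Prop) (s : Finset β) (x : β) :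
    x ∈ cfilter P s ↔ x ∈ s ∧ P x := by
  exact @Finset.mem_filter _ _ (fun _ => Classical.propDecidable _) _ _

/-- For a composition `α` of `n`, with `T'_α` the standard extended tableau of
shape `α` filled top-to-bottom along columns left to right, and
`ρ = read(T'_α)`, the diagram `D_{α^c; read(T'_α)}` produced by the algorithm is
the transpose `{(i,j) : (j,i) ∈ cd(α)}` of the composition diagram of `α`. -/
theorem algorithm_diagram_of_extended_tableau {n : ℕ} (α : List ℕ)
    (hα : ∀ x ∈ α, 0 < x) (hsum : α.sum = n)
    (v q : Fin n → ℕ × ℕ)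
    (hv : ColTopEnum v) (hrv : Set.range v = ↑(cdFinset α))
    (hq : ReadTopEnum q) (hrq : Set.range q = ↑(cdFinset α))
    (ρ : Perm (Fin n)) (hρ : ∀ p : Fin n, v (ρ p) = q p) :
    Dalg (Finset.Icc 1 (n - 1) \ psums α) ρ =
      (cdFinset α).image fun p => (p.2, p.1) := by
  classical
  have hvmem : ∀ m : Fin n, v m ∈ cdFinset α := by
    intro m
    rw [← Finset.mem_coe, ← hrv]
    exact ⟨m, rfl⟩
  have hqmem : ∀ m : Fin n, q m ∈ cdFinset α := by
    intro m
    rw [← Finset.mem_coe, ← hrq]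
    exact ⟨m, rfl⟩
  have hvsurj : ∀ c ∈ cdFinset α, ∃ m, v m = c := by
    intro c hc
    rw [← Finset.mem_coe, ← hrv] at hc
    exact hc
  have hqsurj : ∀ c ∈ cdFinset α, ∃ m, q m = c := by
    intro c hc
    rw [← Finset.mem_coe, ← hrq] at hc
    exact hc
  set L := α.length with hL
  have hstep : ∀ j, j < L → (α.take (j + 1)).sum = (α.take j).sum + α.getD j 0 := by
    intro j hj
    rw [List.sum_take_succ α j hj, List.getD_eq_getElem α 0 hj]
  have hpos : ∀ j, j < L → 1 ≤ α.getD j 0 := by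
    intro j hj
    rw [List.getD_eq_getElem α 0 hj]
    exact hα _ (List.getElem_mem _)
  have hmono : ∀ d i, i + d ≤ L → (α.take i).sum + d ≤ (α.take (i + d)).sum := by
    intro d
    induction d with
    | zero => simp
    | succ d ih =>
      intro i hi
      have h1 := ih i (by omega)
      have h2 := hstep (i + d) (by omega)
      have h3 := hpos (i + d) (by omega)
      have he : i + (d + 1) = (i + d) + 1 := by omega
      rw [he, h2]
      omega
  have hSstrict : ∀ a b, a < b → b ≤ L → (α.take a).sum < (α.take b).sum := by
    intro a b hab hbL
    have h := hmono (b - a) a (by omega)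
    have heq : a + (b - a) = b := by omega
    rw [heq] at h
    omega
  have hsum' : (α.take L).sum = n := by rw [List.take_length]; exact hsum
  have hpsub : psums α ⊆ Finset.Icc 1 (n - 1) := by
    intro z hz
    simp only [psums, Finset.mem_image, Finset.mem_range] at hz
    obtain ⟨j, hj, rfl⟩ := hz
    have h1 := hmono (j + 1) 0 (by omega)
    simp only [Nat.zero_add, List.take_zero, List.sum_nil] at h1
    have h2 := hmono (L - (j + 1)) (j + 1) (by omega)
    have heq : j + 1 + (L - (j + 1)) = L := by omega
    rw [heq, hsum'] at h2
    simp only [Finset.mem_Icc]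
    omega
  -- geometry of the column enumeration
  have hv0 : ∀ h0 : 0 < n, (v ⟨0, h0⟩).2 = 1 := by
    intro h0
    by_contra hne
    obtain ⟨i, hi, h1, h2, h3⟩ := mem_cdFinset.1 (hvmem ⟨0, h0⟩)
    have he : ((i + 1 : ℕ), 1) ∈ cdFinset α := mem_cdFinset.2 ⟨i, hi, rfl, le_refl 1, by omega⟩
    obtain ⟨m, hm⟩ := hvsurj _ he
    have hm2 : (v m).2 = 1 := by rw [hm]
    have hlt : m < (⟨0, h0⟩ : Fin n) := (hv m ⟨0, h0⟩).2 (Or.inl (by omega))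
    have hlt' : (m : ℕ) < 0 := hlt
    omega
  have hjump : ∀ (m : ℕ) (hm1 : m + 1 < n) (hm' : m < n),
      (v ⟨m, hm'⟩).2 < (v ⟨m + 1, hm1⟩).2 → (v ⟨m + 1, hm1⟩).2 = (v ⟨m, hm'⟩).2 + 1 := by
    intro m hm1 hm' hlt
    by_contra hne
    obtain ⟨i, hi, h1, h2, h3⟩ := mem_cdFinset.1 (hvmem ⟨m + 1, hm1⟩)
    have he : ((i + 1 : ℕ), (v ⟨m, hm'⟩).2 + 1) ∈ cdFinset α :=
      mem_cdFinset.2 ⟨i, hi, rfl, by omega, by omega⟩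
    obtain ⟨m', hm'eq⟩ := hvsurj _ he
    have hc2 : (v m').2 = (v ⟨m, hm'⟩).2 + 1 := by rw [hm'eq]
    have hgt : (⟨m, hm'⟩ : Fin n) < m' := (hv _ m').2 (Or.inl (by omega))
    have hlt2 : m' < (⟨m + 1, hm1⟩ : Fin n) := (hv m' _).2 (Or.inl (by omega))
    have hgt' : m < (m' : ℕ) := hgt
    have hlt2' : (m' : ℕ) < m + 1 := hlt2
    omega
  have hgeo : ∀ (m : ℕ) (hm1 : m + 1 < n) (hm' : m < n),
      (((v ⟨m + 1, hm1⟩).1 < (v ⟨m, hm'⟩).1 ∨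
        ((v ⟨m + 1, hm1⟩).1 = (v ⟨m, hm'⟩).1 ∧ (v ⟨m, hm'⟩).2 < (v ⟨m + 1, hm1⟩).2))
       ↔ (v ⟨m, hm'⟩).2 < (v ⟨m + 1, hm1⟩).2) := by
    intro m hm1 hm'
    have hcol := (hv ⟨m, hm'⟩ ⟨m + 1, hm1⟩).1 (Fin.mk_lt_mk.mpr (by omega))
    rcases hcol with hc | ⟨hceq, hrlt⟩
    · constructor
      · intro _; exact hc
      · intro _
        rcases Nat.lt_trichotomy (v ⟨m + 1, hm1⟩).1 (v ⟨m, hm'⟩).1 with h | h | h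
        · exact Or.inl h
        · exact Or.inr ⟨h, hc⟩
        · exfalso
          obtain ⟨i, hi, h1, h2, h3⟩ := mem_cdFinset.1 (hvmem ⟨m + 1, hm1⟩)
          obtain ⟨i', hi', h1', h2', h3'⟩ := mem_cdFinset.1 (hvmem ⟨m, hm'⟩)
          have he : ((i + 1 : ℕ), (v ⟨m, hm'⟩).2) ∈ cdFinset α :=
            mem_cdFinset.2 ⟨i, hi, rfl, by omega, by omega⟩
          obtain ⟨m'', hm''⟩ := hvsurj _ he
          have he1 : (v m'').1 = (v ⟨m + 1, hm1⟩).1 := by rw [hm'']; omega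
          have he2 : (v m'').2 = (v ⟨m, hm'⟩).2 := by rw [hm'']
          have hgt : (⟨m, hm'⟩ : Fin n) < m'' := (hv _ m'').2 (Or.inr ⟨by omega, by omega⟩)
          have hlt2 : m'' < (⟨m + 1, hm1⟩ : Fin n) := (hv m'' _).2 (Or.inl (by omega))
          have hgt' : m < (m'' : ℕ) := hgt
          have hlt2' : (m'' : ℕ) < m + 1 := hlt2
          omega
    · constructor
      · intro h
        exfalso
        rcases h with h | ⟨h, h'⟩ <;> omega
      · intro h; exfalso; omega
  -- descent characterization
  have hvq : ∀ x : Fin n, v x = q (ρ⁻¹ x) := by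
    intro x; rw [← hρ (ρ⁻¹ x), ← Perm.mul_apply, mul_inv_cancel, Perm.one_apply]
  have hDesL0 : ∀ k ∈ DesL ρ, 0 < k ∧ k < n := by
    intro k hk
    unfold DesL at hk
    rw [cfilter_mem, Finset.mem_Ioo] at hk
    exact hk.1
  have hDesL : ∀ (m : ℕ) (hm1 : m + 1 < n) (hm' : m < n),
      (m + 1 ∈ DesL ρ ↔ (v ⟨m, hm'⟩).2 < (v ⟨m + 1, hm1⟩).2) := by
    intro m hm1 hm'
    unfold DesL
    rw [cfilter_mem, Finset.mem_Ioo]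
    have hab : (((⟨m + 1 - 1, by omega⟩ : Fin n)) : ℕ) + 1 = ((⟨m + 1, hm1⟩ : Fin n) : ℕ) := by
      simp
    have hlen := len_swap_lt ρ hab
    have key : ρ⁻¹ ⟨m + 1, hm1⟩ < ρ⁻¹ ⟨m + 1 - 1, by omega⟩ ↔
        (v ⟨m, hm'⟩).2 < (v ⟨m + 1, hm1⟩).2 := by
      rw [hq (ρ⁻¹ ⟨m + 1, hm1⟩) (ρ⁻¹ ⟨m + 1 - 1, by omega⟩), ← hvq, ← hvq]
      exact hgeo m hm1 hm'
    constructor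
    · rintro ⟨_, h', hk, hlen'⟩
      exact key.1 (hlen.1 hlen')
    · intro h
      exact ⟨⟨by omega, by omega⟩, by omega, hm1, hlen.2 (key.2 h)⟩
  -- column count
  have colcount : ∀ (m : ℕ) (hm : m < n),
      (v ⟨m, hm⟩).2 = 1 + ((DesL ρ).filter fun k => k < m + 1).card := by
    intro m
    induction m with
    | zero =>
      intro hm
      have hf : (DesL ρ).filter (fun k => k < 0 + 1) = ∅ := by
        rw [Finset.filter_eq_empty_iff]
        intro k hk
        have := hDesL0 k hk
        omega
      rw [hv0 hm, hf]
      simp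
    | succ m ih =>
      intro hm
      have hm' : m < n := by omega
      have hcol : (v ⟨m, hm'⟩).2 < (v ⟨m + 1, hm⟩).2 ∨
          ((v ⟨m, hm'⟩).2 = (v ⟨m + 1, hm⟩).2 ∧ (v ⟨m, hm'⟩).1 < (v ⟨m + 1, hm⟩).1) :=
        (hv _ _).1 (Fin.mk_lt_mk.mpr (by omega))
      have hcardeq : ((DesL ρ).filter fun k => k < m + 1 + 1).card
          = ((DesL ρ).filter fun k => k < m + 1).card + (if m + 1 ∈ DesL ρ then 1 else 0) :=
        card_filter_lt_succ _ _
      have ihm : (v ⟨m, hm'⟩).2 = 1 + ((DesL ρ).filter fun k => k < m + 1).card := ih hm'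
      by_cases hd : (v ⟨m, hm'⟩).2 < (v ⟨m + 1, hm⟩).2
      · have h1 : m + 1 ∈ DesL ρ := (hDesL m hm hm').2 hd
        have h2 : (v ⟨m + 1, hm⟩).2 = (v ⟨m, hm'⟩).2 + 1 := hjump m hm hm' hd
        rw [hcardeq, if_pos h1]
        omega
      · have h1 : m + 1 ∉ DesL ρ := fun hmem => hd ((hDesL m hm hm').1 hmem)
        rw [hcardeq, if_neg h1]
        have heq2 : (v ⟨m + 1, hm⟩).2 = (v ⟨m, hm'⟩).2 := by
          rcases hcol with h | ⟨h, _⟩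
          · exact absurd h hd
          · omega
        omega
  have claim2 : ∀ p : Fin n, 1 + ((DesL ρ).filter fun k => k < (ρ p : ℕ) + 1).card = (q p).2 := by
    intro p
    rw [← hρ p]
    exact (colcount (ρ p : ℕ) (ρ p).isLt).symm
  -- row count
  have hqinj : Function.Injective q := by
    intro i j hij
    by_contra hne
    rcases Ne.lt_or_gt hne with h | h
    · have := (hq i j).1 h
      rw [hij] at this
      omega
    · have := (hq j i).1 h
      rw [hij] at this
      omega
  have poscount : ∀ p : Fin n, ((cdFinset α).filter fun c =>
      c.1 < (q p).1 ∨ (c.1 = (q p).1 ∧ (q p).2 < c.2)).card = (p : ℕ) := by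
    intro p
    have himg : ((cdFinset α).filter fun c =>
        c.1 < (q p).1 ∨ (c.1 = (q p).1 ∧ (q p).2 < c.2)) = (Finset.Iio p).image q := by
      ext c
      simp only [Finset.mem_filter, Finset.mem_image, Finset.mem_Iio]
      constructor
      · rintro ⟨hc, hlt⟩
        obtain ⟨p', rfl⟩ := hqsurj c hc
        exact ⟨p', (hq p' p).2 hlt, rfl⟩
      · rintro ⟨p', hp', rfl⟩
        exact ⟨hqmem p', (hq p' p).1 hp'⟩
    rw [himg, Finset.card_image_of_injective _ hqinj, Fin.card_Iio]
  have seg : ∀ p : Fin n, ∀ i, i < L → (q p).1 = i + 1 →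
      ((cdFinset α).filter fun c => c.1 = (q p).1 ∧ (q p).2 < c.2).card
        = α.getD i 0 - (q p).2 := by
    intro p i hi h1
    have himg : ((cdFinset α).filter fun c => c.1 = (q p).1 ∧ (q p).2 < c.2)
        = (Finset.Icc ((q p).2 + 1) (α.getD i 0)).image fun j => ((q p).1, j) := by
      ext c
      simp only [Finset.mem_filter, Finset.mem_image, Finset.mem_Icc]
      constructor
      · rintro ⟨hc, hceq, hclt⟩
        obtain ⟨i', hi', h1', h2', h3'⟩ := mem_cdFinset.1 hc
        have hii : i' = i := by omega
        subst hii
        exact ⟨c.2, ⟨by omega, h3'⟩, by rw [← hceq]⟩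
      · rintro ⟨j, ⟨hj1, hj2⟩, rfl⟩
        exact ⟨mem_cdFinset.2 ⟨i, hi, h1, by omega, hj2⟩, rfl, by omega⟩
    rw [himg, Finset.card_image_of_injective _ (fun a b hab => by simpa using hab), Nat.card_Icc]
    omega
  have hbound : ∀ p : Fin n, ∀ i, i < L → (q p).1 = i + 1 →
      (α.take i).sum ≤ (p : ℕ) ∧ (p : ℕ) < (α.take (i + 1)).sum := by
    intro p i hi h1
    obtain ⟨i', hi', h1', h2', h3'⟩ := mem_cdFinset.1 (hqmem p)
    have h2 : 1 ≤ (q p).2 := h2'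
    have h3 : (q p).2 ≤ α.getD i 0 := by
      rw [show i = i' from by omega]
      exact h3'
    have hsplit : ((cdFinset α).filter fun c =>
        c.1 < (q p).1 ∨ (c.1 = (q p).1 ∧ (q p).2 < c.2)).card
        = ((cdFinset α).filter fun c => c.1 < (q p).1).card
          + ((cdFinset α).filter fun c => c.1 = (q p).1 ∧ (q p).2 < c.2).card := by
      rw [Finset.filter_or, Finset.card_union_of_disjoint]
      rw [Finset.disjoint_left]
      intro c hc hc'
      simp only [Finset.mem_filter] at hc hc'
      omega
    have hrows : ((cdFinset α).filter fun c => c.1 < (q p).1).card = (α.take i).sum := by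
      rw [← rows_card α i]
      congr 1
      apply Finset.filter_congr
      intro c _
      rw [h1]
      omega
    have hseg := seg p i hi h1
    have hposc := poscount p
    rw [hsplit, hrows, hseg] at hposc
    have hstep' := hstep i hi
    constructor <;> omega
  have rowcount : ∀ p : Fin n, 1 + ((psums α).filter fun z => z < (p : ℕ) + 1).card = (q p).1 := by
    intro p
    obtain ⟨i, hi, h1, h2, h3⟩ := mem_cdFinset.1 (hqmem p)
    obtain ⟨hlow, hhigh⟩ := hbound p i hi h1
    have himg : ((psums α).filter fun z => z < (p : ℕ) + 1)
        = ((Finset.range (L - 1)).filter fun j => (α.take (j + 1)).sum < (p : ℕ) + 1).image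
            fun j => (α.take (j + 1)).sum := by
      rw [psums, Finset.filter_image]
    have hinj : Set.InjOn (fun j => (α.take (j + 1)).sum)
        ↑((Finset.range (L - 1)).filter fun j => (α.take (j + 1)).sum < (p : ℕ) + 1) := by
      intro a ha b hb hab
      simp only [Finset.coe_filter, Set.mem_setOf_eq, Finset.mem_range] at ha hb
      by_contra hne
      rcases Ne.lt_or_gt hne with h | h
      · exact absurd hab (Nat.ne_of_lt (hSstrict (a + 1) (b + 1) (by omega) (by omega)))
      · exact absurd hab.symm (Nat.ne_of_lt (hSstrict (b + 1) (a + 1) (by omega) (by omega)))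
    have hfeq : ((Finset.range (L - 1)).filter fun j => (α.take (j + 1)).sum < (p : ℕ) + 1)
        = Finset.range i := by
      ext j
      simp only [Finset.mem_filter, Finset.mem_range]
      constructor
      · rintro ⟨hj, hle⟩
        by_contra hji
        have hm := hmono (j + 1 - (i + 1)) (i + 1) (by omega)
        have heq : (i + 1) + (j + 1 - (i + 1)) = j + 1 := by omega
        rw [heq] at hm
        omega
      · intro hji
        refine ⟨by omega, ?_⟩
        have hm := hmono (i - (j + 1)) (j + 1) (by omega)
        have heq : (j + 1) + (i - (j + 1)) = i := by omega
        rw [heq] at hm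
        omega
    rw [himg, Finset.card_image_of_injOn hinj, hfeq, Finset.card_range]
    omega
  -- final assembly
  have hsd : Finset.Icc 1 (n - 1) \ (Finset.Icc 1 (n - 1) \ psums α) = psums α := by
    rw [sdiff_sdiff_right_self]
    exact inf_eq_right.mpr hpsub
  have himq : Finset.image q Finset.univ = cdFinset α := by
    apply Finset.coe_injective
    rw [Finset.coe_image, Finset.coe_univ, Set.image_univ, hrq]
  unfold Dalg
  rw [hsd]
  have hfun : (fun p : Fin n => (1 + ((DesL ρ).filter fun k => k < (ρ p : ℕ) + 1).card,
      1 + ((psums α).filter fun z => z < (p : ℕ) + 1).card))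
      = (fun c : ℕ × ℕ => (c.2, c.1)) ∘ q := by
    funext p
    simp only [Function.comp_apply]
    exact Prod.ext (claim2 p) (rowcount p)
  rw [hfun, ← Finset.image_image, himq]
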